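/- arXiv:1610.06835 — 5 statements merged into one kernel-verified Lean document; each statement's English description precedes it below -/
import Mathlib

section
/- Let X be an integrable random variable with expected maxima μ_k. Then ∫_0^1 (1−u)^{k−1} F^{-1}(u) du = −(1/k) Σ_{j=1}^k (−1)^j C(k,j) μ_j, and hence Σ_{j=1}^k (−1)^j C(k,j) μ_j = o(k) as k → ∞. -/
open MeasureTheory

lemma aux_one_sub_pow (u : ℝ) (n : ℕ) :
    (1 - u) ^ n = ∑ m ∈ Finset.range (n + 1), (-1 : ℝ) ^ m * (n.choose m : ℝ) * u ^ m := by
  rw [sub_eq_neg_add, add_pow]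
  refine Finset.sum_congr rfl fun m _ => ?_
  rw [neg_pow, one_pow]; ring

theorem stmt_4 (P : Measure ℝ) [IsProbabilityMeasure P]
    (hX : Integrable id P)
    (F : ℝ → ℝ) (hF : ∀ x, F x = (P (Set.Iic x)).toReal)
    (Finv : ℝ → ℝ) (hFinv : ∀ u, Finv u = sInf {x : ℝ | u ≤ F x})
    (μ : ℕ → ℝ)
    (hμ : ∀ j : ℕ, 1 ≤ j →
      μ j = (j : ℝ) * ∫ u in Set.Ioo (0 : ℝ) 1, u ^ (j - 1) * Finv u) :
    (∀ k : ℕ, 1 ≤ k →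
        ∫ u in Set.Ioo (0 : ℝ) 1, (1 - u) ^ (k - 1) * Finv u
          = -(1 / (k : ℝ)) * ∑ j ∈ Finset.Icc 1 k, (-1 : ℝ) ^ j * (k.choose j : ℝ) * μ j)
      ∧ Filter.Tendsto
          (fun k : ℕ => (∑ j ∈ Finset.Icc 1 k, (-1 : ℝ) ^ j * (k.choose j : ℝ) * μ j) / k)
          Filter.atTop (nhds 0) := by
  classical
  have hFc : F = ⇑(ProbabilityTheory.cdf P) := by
    funext x; rw [hF, ProbabilityTheory.cdf_eq_real, measureReal_def]
  have hmono : Monotone F := by rw [hFc]; exact ProbabilityTheory.monotone_cdf P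
  have hFtop : Filter.Tendsto F Filter.atTop (nhds 1) := by
    rw [hFc]; exact ProbabilityTheory.tendsto_cdf_atTop P
  have hFbot : Filter.Tendsto F Filter.atBot (nhds 0) := by
    rw [hFc]; exact ProbabilityTheory.tendsto_cdf_atBot P
  have hne : ∀ u : ℝ, u < 1 → {x : ℝ | u ≤ F x}.Nonempty := by
    intro u hu
    obtain ⟨x, hx⟩ := (hFtop.eventually (eventually_ge_nhds hu)).exists
    exact ⟨x, hx⟩
  have hbdd : ∀ u : ℝ, 0 < u → BddBelow {x : ℝ | u ≤ F x} := by
    intro u hu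
    obtain ⟨y, hy⟩ := (hFbot.eventually (eventually_lt_nhds hu)).exists
    refine ⟨y, fun z hz => ?_⟩
    by_contra h
    push_neg at h
    exact absurd (le_trans hz (hmono h.le)) (not_le.2 hy)
  -- Galois connection on (0,1)
  have hgal : ∀ u ∈ Set.Ioo (0 : ℝ) 1, ∀ x : ℝ, Finv u ≤ x ↔ u ≤ F x := by
    intro u hu x
    rw [hFinv]
    constructor
    · intro h
      have key : ∀ y : ℝ, x < y → u ≤ F y := by
        intro y hy
        obtain ⟨z, hz, hzy⟩ := exists_lt_of_csInf_lt (hne u hu.2) (lt_of_le_of_lt h hy)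
        exact le_trans hz (hmono hzy.le)
      have hrc : ContinuousWithinAt F (Set.Ici x) x := by
        rw [hFc]; exact (ProbabilityTheory.cdf P).right_continuous x
      have htd : Filter.Tendsto F (nhdsWithin x (Set.Ioi x)) (nhds (F x)) :=
        hrc.tendsto.mono_left (nhdsWithin_mono x Set.Ioi_subset_Ici_self)
      exact ge_of_tendsto htd (eventually_nhdsWithin_of_forall fun y hy => key y hy)
    · intro h
      exact csInf_le (hbdd u hu.1) h
  have hmonoFinv : MonotoneOn Finv (Set.Ioo (0 : ℝ) 1) := by
    intro a ha b hb hab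
    rw [hFinv, hFinv]
    exact csInf_le_csInf (hbdd a ha.1) (hne b hb.2) fun x hx => le_trans hab hx
  have hmeas : AEMeasurable Finv (volume.restrict (Set.Ioo (0 : ℝ) 1)) :=
    aemeasurable_restrict_of_monotoneOn measurableSet_Ioo hmonoFinv
  have hprob : IsProbabilityMeasure (volume.restrict (Set.Ioo (0 : ℝ) 1)) := by
    constructor
    simp [Real.volume_Ioo]
  -- pushforward
  have hmap : Measure.map Finv (volume.restrict (Set.Ioo (0 : ℝ) 1)) = P := by
    have hpm : IsProbabilityMeasure (Measure.map Finv (volume.restrict (Set.Ioo (0 : ℝ) 1))) :=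
      Measure.isProbabilityMeasure_map hmeas
    refine MeasureTheory.Measure.ext_of_Iic _ _ fun x => ?_
    rw [Measure.map_apply_of_aemeasurable hmeas measurableSet_Iic,
      Measure.restrict_apply' measurableSet_Ioo]
    have hset : Finv ⁻¹' Set.Iic x ∩ Set.Ioo 0 1 = Set.Iic (F x) ∩ Set.Ioo 0 1 := by
      ext u
      simp only [Set.mem_inter_iff, Set.mem_preimage, Set.mem_Iic, and_congr_left_iff]
      intro hu
      exact hgal u hu x
    rw [hset]
    have hF0 : 0 ≤ F x := by rw [hFc]; exact ProbabilityTheory.cdf_nonneg P x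
    have hF1 : F x ≤ 1 := by rw [hFc]; exact ProbabilityTheory.cdf_le_one P x
    have hP : P (Set.Iic x) = ENNReal.ofReal (F x) := by
      rw [hFc]; exact (ProbabilityTheory.ofReal_cdf P x).symm
    rw [hP]
    rcases lt_or_eq_of_le hF1 with h1 | h1
    · have : Set.Iic (F x) ∩ Set.Ioo 0 1 = Set.Ioc 0 (F x) := by
        ext u
        simp only [Set.mem_inter_iff, Set.mem_Iic, Set.mem_Ioo, Set.mem_Ioc]
        constructor
        · rintro ⟨h, h0, _⟩; exact ⟨h0, h⟩
        · rintro ⟨h0, h⟩; exact ⟨h, h0, lt_of_le_of_lt h h1⟩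
      rw [this, Real.volume_Ioc, sub_zero]
    · have : Set.Iic (F x) ∩ Set.Ioo 0 1 = Set.Ioo 0 1 := by
        rw [Set.inter_eq_self_of_subset_right]
        intro u hu
        rw [← h1] at hu
        exact le_of_lt hu.2
      rw [this, Real.volume_Ioo, sub_zero, ← h1]
  -- integrability
  have hIntFinv : Integrable Finv (volume.restrict (Set.Ioo (0 : ℝ) 1)) := by
    have h := (integrable_map_measure (f := Finv) (g := id) ?_ hmeas).mp ?_
    · simpa [Function.comp] using h
    · rw [hmap]; exact aestronglyMeasurable_id
    · rw [hmap]; exact hX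
  have hIntPow : ∀ j : ℕ, Integrable (fun u => u ^ j * Finv u)
      (volume.restrict (Set.Ioo (0 : ℝ) 1)) := by
    intro j
    refine Integrable.mono' hIntFinv.abs
      (((measurable_id.pow_const j).aemeasurable.mul hmeas).aestronglyMeasurable) ?_
    filter_upwards [ae_restrict_mem measurableSet_Ioo] with u hu
    rw [Real.norm_eq_abs, abs_mul]
    have h1 : |u ^ j| ≤ 1 := by
      rw [abs_pow]
      exact pow_le_one₀ (abs_nonneg u) (abs_le.2 ⟨by linarith [hu.1], hu.2.le⟩)
    calc |u ^ j| * |Finv u| ≤ 1 * |Finv u| :=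
          mul_le_mul_of_nonneg_right h1 (abs_nonneg _)
      _ = |Finv u| := one_mul _
  have hIntOneSub : ∀ n : ℕ, Integrable (fun u => (1 - u) ^ n * Finv u)
      (volume.restrict (Set.Ioo (0 : ℝ) 1)) := by
    intro n
    refine Integrable.mono' hIntFinv.abs
      ((((measurable_const.sub measurable_id).pow_const n).aemeasurable.mul
        hmeas).aestronglyMeasurable) ?_
    filter_upwards [ae_restrict_mem measurableSet_Ioo] with u hu
    rw [Real.norm_eq_abs, abs_mul]
    have h1 : |(1 - u) ^ n| ≤ 1 := by
      rw [abs_pow]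
      exact pow_le_one₀ (abs_nonneg _) (abs_le.2 ⟨by linarith [hu.2], by linarith [hu.1]⟩)
    calc |(1 - u) ^ n| * |Finv u| ≤ 1 * |Finv u| :=
          mul_le_mul_of_nonneg_right h1 (abs_nonneg _)
      _ = |Finv u| := one_mul _
  -- the value of each moment integral
  have hμ' : ∀ m : ℕ, ∫ u in Set.Ioo (0 : ℝ) 1, u ^ m * Finv u = μ (m + 1) / ((m : ℝ) + 1) := by
    intro m
    have h := hμ (m + 1) (Nat.le_add_left 1 m)
    simp only [Nat.add_sub_cancel] at h
    rw [h]
    push_cast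
    rw [mul_div_cancel_left₀]
    positivity
  -- Part 1
  have key : ∀ k : ℕ, 1 ≤ k →
      ∫ u in Set.Ioo (0 : ℝ) 1, (1 - u) ^ (k - 1) * Finv u
        = -(1 / (k : ℝ)) * ∑ j ∈ Finset.Icc 1 k, (-1 : ℝ) ^ j * (k.choose j : ℝ) * μ j := by
    intro k hk
    obtain ⟨n, rfl⟩ : ∃ n, k = n + 1 := ⟨k - 1, (Nat.succ_pred_eq_of_pos hk).symm⟩
    simp only [Nat.add_sub_cancel]
    have hLHS : ∫ u in Set.Ioo (0 : ℝ) 1, (1 - u) ^ n * Finv u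
        = ∑ m ∈ Finset.range (n + 1),
            ((-1 : ℝ) ^ m * (n.choose m : ℝ)) * ∫ u in Set.Ioo (0 : ℝ) 1, u ^ m * Finv u := by
      calc ∫ u in Set.Ioo (0 : ℝ) 1, (1 - u) ^ n * Finv u
          = ∫ u in Set.Ioo (0 : ℝ) 1,
              ∑ m ∈ Finset.range (n + 1), ((-1 : ℝ) ^ m * (n.choose m : ℝ)) * (u ^ m * Finv u) := by
            refine integral_congr_ae (Filter.Eventually.of_forall fun u => ?_)
            dsimp only
            rw [aux_one_sub_pow, Finset.sum_mul]
            exact Finset.sum_congr rfl fun m _ => by ring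
        _ = ∑ m ∈ Finset.range (n + 1),
              ∫ u in Set.Ioo (0 : ℝ) 1, ((-1 : ℝ) ^ m * (n.choose m : ℝ)) * (u ^ m * Finv u) :=
            integral_finset_sum _ fun m _ => (hIntPow m).const_mul _
        _ = ∑ m ∈ Finset.range (n + 1),
              ((-1 : ℝ) ^ m * (n.choose m : ℝ)) * ∫ u in Set.Ioo (0 : ℝ) 1, u ^ m * Finv u :=
            Finset.sum_congr rfl fun m _ => integral_const_mul _ _
    rw [hLHS]
    have hRHS : ∑ j ∈ Finset.Icc 1 (n + 1), (-1 : ℝ) ^ j * ((n + 1).choose j : ℝ) * μ j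
        = ∑ m ∈ Finset.range (n + 1),
            (-1 : ℝ) ^ (m + 1) * ((n + 1).choose (m + 1) : ℝ) * μ (m + 1) := by
      rw [← Finset.Ico_add_one_right_eq_Icc, Finset.sum_Ico_eq_sum_range]
      exact Finset.sum_congr rfl fun m _ => by rw [add_comm 1 m]
    rw [hRHS, Finset.mul_sum]
    refine Finset.sum_congr rfl fun m _ => ?_
    rw [hμ' m]
    have hc : ((n : ℝ) + 1) * (n.choose m : ℝ) = (((n + 1).choose (m + 1) : ℕ) : ℝ) * ((m : ℝ) + 1) := by
      exact_mod_cast congrArg (Nat.cast (R := ℝ)) (Nat.add_one_mul_choose_eq n m)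
    have hm : ((m : ℝ) + 1) ≠ 0 := by positivity
    have hn : ((n : ℝ) + 1) ≠ 0 := by positivity
    have hcast : ((n + 1 : ℕ) : ℝ) = (n : ℝ) + 1 := by push_cast; ring
    rw [hcast]
    field_simp
    linear_combination ((-1 : ℝ) ^ m * μ (m + 1)) * hc
  refine ⟨key, ?_⟩
  -- Part 2: dominated convergence
  have hI : Filter.Tendsto (fun k : ℕ => ∫ u in Set.Ioo (0 : ℝ) 1, (1 - u) ^ (k - 1) * Finv u)
      Filter.atTop (nhds 0) := by
    have h := tendsto_integral_of_dominated_convergence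
      (μ := volume.restrict (Set.Ioo (0 : ℝ) 1))
      (F := fun (k : ℕ) (u : ℝ) => (1 - u) ^ (k - 1) * Finv u)
      (f := fun _ => (0 : ℝ)) (bound := fun u => |Finv u|)
      (fun k => (((measurable_const.sub measurable_id).pow_const (k - 1)).aemeasurable.mul
        hmeas).aestronglyMeasurable)
      hIntFinv.abs
      (fun k => by
        filter_upwards [ae_restrict_mem measurableSet_Ioo] with u hu
        rw [Real.norm_eq_abs, abs_mul]
        have h1 : |(1 - u) ^ (k - 1)| ≤ 1 := by
          rw [abs_pow]
          exact pow_le_one₀ (abs_nonneg _) (abs_le.2 ⟨by linarith [hu.2], by linarith [hu.1]⟩)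
        calc |(1 - u) ^ (k - 1)| * |Finv u| ≤ 1 * |Finv u| :=
              mul_le_mul_of_nonneg_right h1 (abs_nonneg _)
          _ = |Finv u| := one_mul _)
      (by
        filter_upwards [ae_restrict_mem measurableSet_Ioo] with u hu
        have h1 : |1 - u| < 1 := abs_lt.2 ⟨by linarith [hu.2], by linarith [hu.1]⟩
        have h2 : Filter.Tendsto (fun k : ℕ => (1 - u) ^ k) Filter.atTop (nhds 0) :=
          tendsto_pow_atTop_nhds_zero_of_abs_lt_one h1
        have h3 : Filter.Tendsto (fun k : ℕ => (1 - u) ^ (k - 1)) Filter.atTop (nhds 0) :=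
          h2.comp (Filter.tendsto_sub_atTop_nat 1)
        simpa using h3.mul_const (Finv u))
    simpa using h
  have hneg := hI.neg
  rw [neg_zero] at hneg
  refine Filter.Tendsto.congr' ?_ hneg
  filter_upwards [Filter.eventually_ge_atTop 1] with k hk
  rw [key k hk]
  ring
end

section
/- Define β_{i,n} = (n!/((i−1)!(n−i)!)) Σ_{j=0}^{n−i} C(n−i,j) (−1)^j μ_{i+j}/(i+j) for a real sequence {μ_k} and 1 ≤ i ≤ n. Then for every n ≥ 2 and 1 ≤ i ≤ n−1, β_{i+1,n} − β_{i,n} = C(n,i) (−1)^{n−i+1} Δ^{n−i} μ_i. -/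
def fdiff (f : ℕ → ℝ) : ℕ → ℝ := fun k => f (k + 1) - f k

lemma fdiff_iter (μ : ℕ → ℝ) (m i : ℕ) :
    fdiff^[m] μ i = ∑ k ∈ Finset.range (m+1),
      (-1:ℝ)^(m-k) * ((m.choose k : ℕ) : ℝ) * μ (i + k) := by
  have h := fwdDiff_iter_eq_sum_shift (1:ℕ) (G := ℝ) μ m i
  have he : fdiff = fwdDiff (1:ℕ) := rfl
  rw [he, h]
  apply Finset.sum_congr rfl
  intro k _
  push_cast [smul_eq_mul, zsmul_eq_mul]
  ring_nf


lemma natkey (i m j : ℕ) (hm : 1 ≤ m) :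
    (i+1) * ((i+m).choose (i+1)) * ((m-1).choose j) + i * ((i+m).choose i) * (m.choose (j+1))
      = ((i+m).choose i) * (m.choose (j+1)) * (i+1+j) := by
  have h1 : (i+m).choose (i+1) * (i+1) = (i+m).choose i * m := by
    rw [Nat.choose_succ_right_eq]; congr 1; omega
  have h2 : m * (m-1).choose j = m.choose (j+1) * (j+1) := by
    have h := Nat.add_one_mul_choose_eq (m-1) j
    rwa [show m-1+1 = m by omega] at h
  calc (i+1) * ((i+m).choose (i+1)) * ((m-1).choose j) + i * ((i+m).choose i) * (m.choose (j+1))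
      = ((i+m).choose (i+1) * (i+1)) * ((m-1).choose j) + i * ((i+m).choose i) * (m.choose (j+1)) := by ring
    _ = ((i+m).choose i * m) * ((m-1).choose j) + i * ((i+m).choose i) * (m.choose (j+1)) := by rw [h1]
    _ = (i+m).choose i * (m * (m-1).choose j) + i * ((i+m).choose i) * (m.choose (j+1)) := by ring
    _ = (i+m).choose i * (m.choose (j+1) * (j+1)) + i * ((i+m).choose i) * (m.choose (j+1)) := by rw [h2]
    _ = ((i+m).choose i) * (m.choose (j+1)) * (i+1+j) := by ring

lemma coefA (i m : ℕ) (hi : 1 ≤ i) :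
    ((i+m).factorial : ℝ) / ((Nat.factorial (i-1) : ℝ) * (Nat.factorial m : ℝ))
      = (i : ℝ) * ((i+m).choose i : ℝ) := by
  have h := Nat.choose_mul_factorial_mul_factorial (Nat.le_add_right i m)
  have hfi : i.factorial = i * (i-1).factorial := by
    conv_lhs => rw [show i = i - 1 + 1 by omega, Nat.factorial_succ, show i-1+1 = i by omega]
  have hnat : (i+m).factorial = i * ((i+m).choose i) * ((i-1).factorial * m.factorial) := by
    rw [← h, hfi, Nat.add_sub_cancel_left]; ring
  rw [div_eq_iff (by positivity)]
  push_cast [hnat]; ring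

lemma coefB (i m : ℕ) (hm : 1 ≤ m) :
    ((i+m).factorial : ℝ) / ((Nat.factorial i : ℝ) * (Nat.factorial (m-1) : ℝ))
      = ((i:ℝ)+1) * ((i+m).choose (i+1) : ℝ) := by
  have h := Nat.choose_mul_factorial_mul_factorial (show i+1 ≤ i+m by omega)
  have hnat : (i+m).factorial = (i+1) * ((i+m).choose (i+1)) * (i.factorial * (m-1).factorial) := by
    rw [← h, Nat.factorial_succ, show i+m-(i+1) = m-1 by omega]; ring
  rw [div_eq_iff (by positivity)]
  push_cast [hnat]; ring

theorem stmt_5 (μ : ℕ → ℝ) (β : ℕ → ℕ → ℝ)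
    (hβ : ∀ i n : ℕ, β i n =
      (Nat.factorial n : ℝ) / ((Nat.factorial (i - 1) : ℝ) * (Nat.factorial (n - i) : ℝ))
        * ∑ j ∈ Finset.range (n - i + 1),
            ((n - i).choose j : ℝ) * (-1 : ℝ) ^ j / ((i : ℝ) + j) * μ (i + j)) :
    ∀ n i : ℕ, 2 ≤ n → 1 ≤ i → i ≤ n - 1 →
      β (i + 1) n - β i n
        = (n.choose i : ℝ) * (-1 : ℝ) ^ (n - i + 1) * fdiff^[n - i] μ i := by
  intro n i hn hi hin
  obtain ⟨m, hm1, rfl⟩ : ∃ m, 1 ≤ m ∧ n = i + m := ⟨n - i, by omega, by omega⟩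
  rw [hβ (i+1) (i+m), hβ i (i+m)]
  rw [show i + m - (i+1) = m - 1 by omega, show i + 1 - 1 = i by omega,
      Nat.add_sub_cancel_left, show m - 1 + 1 = m by omega]
  rw [fdiff_iter]
  rw [coefA i m hi, coefB i m hm1]
  rw [Finset.sum_range_succ' _ m, Finset.sum_range_succ'
    (fun k => (-1:ℝ)^(m-k) * ((m.choose k : ℕ) : ℝ) * μ (i + k)) m]
  rw [mul_add, mul_add, sub_add_eq_sub_sub]
  rw [Finset.mul_sum, Finset.mul_sum, Finset.mul_sum, ← Finset.sum_sub_distrib]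
  have hterm : ∀ j ∈ Finset.range m,
      ((i:ℝ) + 1) * ((i + m).choose (i + 1) : ℝ) *
          ((((m - 1).choose j : ℕ):ℝ) * (-1) ^ j / (((i + 1 : ℕ):ℝ) + (j:ℝ)) * μ (i + 1 + j)) -
        (i:ℝ) * ((i + m).choose i : ℝ) *
          (((m.choose (j + 1) : ℕ):ℝ) * (-1) ^ (j + 1) / ((i:ℝ) + ((j + 1 : ℕ):ℝ)) * μ (i + (j + 1)))
      = ((i + m).choose i : ℝ) * (-1) ^ (m + 1) *
          ((-1) ^ (m - (j + 1)) * ((m.choose (j + 1):ℕ) : ℝ) * μ (i + (j + 1))) := by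
    intro j hj
    have hjm : j + 1 ≤ m := Finset.mem_range.mp hj
    have hkeyR : ((i:ℝ)+1) * ((i+m).choose (i+1) : ℝ) * (((m-1).choose j : ℕ) : ℝ)
        + (i:ℝ) * ((i+m).choose i : ℝ) * ((m.choose (j+1) : ℕ) : ℝ)
        = ((i+m).choose i : ℝ) * ((m.choose (j+1):ℕ) : ℝ) * ((i:ℝ)+1+(j:ℝ)) := by
      exact_mod_cast congrArg (fun t : ℕ => (t:ℝ)) (natkey i m j hm1)
    obtain ⟨d, hd⟩ : ∃ d, m = d + (j + 1) := ⟨m - (j+1), by omega⟩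
    have hsgn : (-1:ℝ)^(m+1) * (-1:ℝ)^(m-(j+1)) = (-1:ℝ)^j := by
      rw [show m - (j+1) = d by omega, show m + 1 = d + (j + 2) by omega,
          ← pow_add, show d + (j + 2) + d = 2*(d+1) + j by ring, pow_add, pow_mul]
      norm_num
    rw [show ((i + m).choose i : ℝ) * (-1:ℝ) ^ (m + 1) *
        ((-1:ℝ) ^ (m - (j + 1)) * ((m.choose (j + 1):ℕ) : ℝ) * μ (i + (j + 1)))
        = ((i + m).choose i : ℝ) * ((m.choose (j + 1):ℕ) : ℝ) * μ (i + (j + 1)) * (-1:ℝ)^j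
        from by rw [← hsgn]; ring]
    rw [show i + 1 + j = i + (j + 1) by omega]
    have hne : ((i:ℝ) + 1 + (j:ℝ)) ≠ 0 := by positivity
    have hne2 : ((i:ℝ) + ((j:ℝ) + 1)) ≠ 0 := by positivity
    push_cast
    field_simp
    linear_combination (((i:ℝ) + 1 + (j:ℝ)) * (-1:ℝ)^j * μ (i + (j + 1))) * hkeyR
  rw [Finset.sum_congr rfl hterm]
  have hic : ((i:ℝ)) ≠ 0 := Nat.cast_ne_zero.mpr (by omega)
  have hmm : (-1:ℝ)^(m+1) * (-1:ℝ)^(m-0) = -1 := by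
    rw [Nat.sub_zero, ← pow_add, show m+1+m = 2*m+1 by ring, pow_add, pow_mul]
    norm_num
  have hc : (i:ℝ) * ((i + m).choose i : ℝ) *
        (((m.choose 0 : ℕ):ℝ) * (-1:ℝ)^0 / ((i:ℝ) + ((0:ℕ):ℝ)) * μ (i+0))
      + ((i + m).choose i : ℝ) * (-1:ℝ)^(m+1) *
        ((-1:ℝ)^(m-0) * ((m.choose 0 : ℕ):ℝ) * μ (i+0)) = 0 := by
    simp only [Nat.choose_zero_right, Nat.cast_one, pow_zero, Nat.cast_zero, add_zero,
      Nat.sub_zero]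
    field_simp
    have h1 : (-1:ℝ)^(m*2) = 1 := by rw [mul_comm, pow_mul]; norm_num
    have h2 : (-1:ℝ)^m * (-1:ℝ)^(m-0) = 1 := by
      rw [Nat.sub_zero, ← pow_add, ← two_mul, pow_mul]; norm_num
    linear_combination (-(((i + m).choose i : ℝ) * μ i)) * h1
  linarith [hc]
end

section
/- Let μ_1, μ_2 be finite measures on (0,∞) and g_i(x) = ∫ (e^y/(1−e^{−y}))(s_i(y) − e^{−xy}) dμ_i(y) (i = 1,2) be well-defined for x ≥ 1. If g_1(k) − g_2(k) is a constant c for all positive integers k, then μ_1 = μ_2 (and hence g_1(x) − g_2(x) = c for all x ≥ 1). -/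
open MeasureTheory

private lemma aux_ae_pos {μ : Measure ℝ} (h : μ (Set.Iic 0) = 0) : ∀ᵐ y ∂μ, 0 < y := by
  rw [ae_iff]
  simp only [not_lt]
  exact h

/-- Two finite measures on `(0,∞)` with equal Laplace transforms at natural numbers
are equal. -/
private lemma moments_ext (μ ν : Measure ℝ) [IsFiniteMeasure μ] [IsFiniteMeasure ν]
    (hμ : μ (Set.Iic 0) = 0) (hν : ν (Set.Iic 0) = 0)
    (h : ∀ n : ℕ, ∫ y, Real.exp (-(n * y)) ∂μ = ∫ y, Real.exp (-(n * y)) ∂ν) :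
    μ = ν := by
  classical
  set e : ℝ → ℝ := fun y => Real.exp (-y) with he_def
  have hec : Continuous e := Real.continuous_exp.comp continuous_neg
  have heinj : Function.Injective e := fun a b hab => by
    have := Real.exp_injective hab
    linarith [neg_injective this]
  have emb : MeasurableEmbedding e := hec.measurableEmbedding heinj
  set K : Set ℝ := Set.Icc (0 : ℝ) 1 with hK_def
  -- the pushforward measures are concentrated on K
  have hmemK : ∀ (m : Measure ℝ), m (Set.Iic 0) = 0 → ∀ᵐ x ∂(m.map e), x ∈ K := by
    intro m hm
    refine (ae_map_iff emb.measurable.aemeasurable (by exact measurableSet_Icc)).mpr ?_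
    filter_upwards [aux_ae_pos hm] with y hy
    exact ⟨(Real.exp_pos _).le, Real.exp_le_one_iff.mpr (by linarith)⟩
  -- powers are integrable w.r.t. measures concentrated on K
  have hintpow : ∀ (m : Measure ℝ), IsFiniteMeasure m → (∀ᵐ x ∂m, x ∈ K) →
      ∀ n : ℕ, Integrable (fun x : ℝ => x ^ n) m := by
    intro m hmfin hm n
    refine Integrable.mono' (integrable_const (1 : ℝ))
      (continuous_pow n).aestronglyMeasurable ?_
    filter_upwards [hm] with x hx
    rw [Real.norm_eq_abs, abs_pow]
    exact pow_le_one₀ (abs_nonneg x) (abs_le.mpr ⟨by linarith [hx.1], hx.2⟩)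
  -- polynomials integrate as sums of moments
  have hevalsum : ∀ (m : Measure ℝ), IsFiniteMeasure m → (∀ᵐ x ∂m, x ∈ K) →
      ∀ p : Polynomial ℝ, ∫ x, p.eval x ∂m
        = ∑ i ∈ Finset.range (p.natDegree + 1), p.coeff i * ∫ x, x ^ i ∂m := by
    intro m hmfin hm p
    have : ∀ x : ℝ, p.eval x = ∑ i ∈ Finset.range (p.natDegree + 1), p.coeff i * x ^ i := by
      intro x
      rw [Polynomial.eval_eq_sum_range]
    simp_rw [this]
    rw [integral_finset_sum]
    · exact Finset.sum_congr rfl fun i _ => integral_const_mul _ _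
    · exact fun i _ => ((hintpow m hmfin hm i).const_mul _)
  have hintpoly : ∀ (m : Measure ℝ), IsFiniteMeasure m → (∀ᵐ x ∂m, x ∈ K) →
      ∀ p : Polynomial ℝ, Integrable (fun x : ℝ => p.eval x) m := by
    intro m hmfin hm p
    have : ∀ x : ℝ, p.eval x = ∑ i ∈ Finset.range (p.natDegree + 1), p.coeff i * x ^ i := by
      intro x; rw [Polynomial.eval_eq_sum_range]
    simp_rw [this]
    exact integrable_finset_sum _ fun i _ => ((hintpow m hmfin hm i).const_mul _)
  -- equal moments for the pushforwards
  have hmom : ∀ n : ℕ, ∫ x, x ^ n ∂(μ.map e) = ∫ x, x ^ n ∂(ν.map e) := by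
    intro n
    rw [integral_map emb.measurable.aemeasurable (continuous_pow n).aestronglyMeasurable,
      integral_map emb.measurable.aemeasurable (continuous_pow n).aestronglyMeasurable]
    have : ∀ y : ℝ, (e y) ^ n = Real.exp (-(n * y)) := by
      intro y
      rw [he_def]
      rw [← Real.exp_nat_mul]
      congr 1
      ring
    simp_rw [this]
    exact h n
  have hμfin : IsFiniteMeasure (μ.map e) := Measure.isFiniteMeasure_map μ e
  have hνfin : IsFiniteMeasure (ν.map e) := Measure.isFiniteMeasure_map ν e
  -- equal polynomial integrals for the pushforwards
  have hpoly : ∀ p : Polynomial ℝ, ∫ x, p.eval x ∂(μ.map e) = ∫ x, p.eval x ∂(ν.map e) := by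
    intro p
    rw [hevalsum _ hμfin (hmemK μ hμ) p, hevalsum _ hνfin (hmemK ν hν) p]
    exact Finset.sum_congr rfl fun i _ => by rw [hmom i]
  -- the pushforward measures are equal
  have hmap : μ.map e = ν.map e := by
    apply ext_of_forall_lintegral_eq_of_IsFiniteMeasure
    intro f
    set F : ℝ → ℝ := fun x => (f x : ℝ) with hF_def
    have hFc : Continuous F := NNReal.continuous_coe.comp f.continuous
    obtain ⟨Cb, hCb⟩ := f.bounded
    have hFle : ∀ x : ℝ, ‖F x‖ ≤ Cb + F 0 := by
      intro x
      have h1 : dist (f x) (f 0) ≤ Cb := hCb x 0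
      rw [NNReal.dist_eq] at h1
      have h2 : F x - F 0 ≤ Cb := by
        calc F x - F 0 ≤ |F x - F 0| := le_abs_self _
          _ ≤ Cb := h1
      have h3 : (0 : ℝ) ≤ F x := (f x).2
      rw [Real.norm_eq_abs, abs_of_nonneg h3]
      linarith
    have hFint : ∀ (m : Measure ℝ), IsFiniteMeasure m → Integrable F m := by
      intro m hmfin
      exact Integrable.mono' (integrable_const (Cb + F 0)) hFc.aestronglyMeasurable
        (Filter.Eventually.of_forall hFle)
    have key : ∫ x, F x ∂(μ.map e) = ∫ x, F x ∂(ν.map e) := by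
      set C : ℝ := ((μ.map e) Set.univ).toReal + ((ν.map e) Set.univ).toReal with hC_def
      have hC0 : 0 ≤ C := by positivity
      rw [← sub_eq_zero]
      rw [← abs_eq_zero]
      refine le_antisymm ?_ (abs_nonneg _)
      have hbound : ∀ ε : ℝ, 0 < ε →
          |∫ x, F x ∂(μ.map e) - ∫ x, F x ∂(ν.map e)| ≤ ε * C := by
        intro ε hε
        -- Stone-Weierstrass approximation on K
        haveI : CompactSpace K := isCompact_iff_compactSpace.mp isCompact_Icc
        let g₀ : C(K, ℝ) := ⟨fun u => F u, hFc.comp continuous_subtype_val⟩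
        have hg₀ : g₀ ∈ closure ((polynomialFunctions K : Subalgebra ℝ C(K, ℝ)) : Set C(K, ℝ)) := by
          have h1 : (polynomialFunctions K).topologicalClosure = ⊤ :=
            polynomialFunctions.topologicalClosure K
          have h2 : g₀ ∈ (polynomialFunctions K).topologicalClosure := by
            rw [h1]; trivial
          exact h2
        obtain ⟨q, hq, hdist⟩ := Metric.mem_closure_iff.mp hg₀ ε hε
        obtain ⟨p, rfl⟩ : ∃ p : Polynomial ℝ, p.toContinuousMapOn K = q := by
          rw [polynomialFunctions_coe] at hq
          obtain ⟨p, hp⟩ := hq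
          exact ⟨p, hp⟩
        have happrox : ∀ x ∈ K, ‖F x - p.eval x‖ ≤ ε := by
          intro x hx
          have h3 := (ContinuousMap.dist_le hε.le).mp hdist.le ⟨x, hx⟩
          simpa [g₀, Real.dist_eq, Polynomial.toContinuousMapOn,
            Polynomial.toContinuousMap, Real.norm_eq_abs] using h3
        have hb : ∀ (m : Measure ℝ), IsFiniteMeasure m → (∀ᵐ x ∂m, x ∈ K) →
            ‖∫ x, F x ∂m - ∫ x, p.eval x ∂m‖ ≤ ε * (m Set.univ).toReal := by
          intro m hmfin hm
          rw [← integral_sub (hFint m hmfin) (hintpoly m hmfin hm p)]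
          refine norm_integral_le_of_norm_le_const ?_
          filter_upwards [hm] with x hx
          exact happrox x hx
        have h4 := hb (μ.map e) hμfin (hmemK μ hμ)
        have h5 := hb (ν.map e) hνfin (hmemK ν hν)
        have h6 := hpoly p
        calc |∫ x, F x ∂(μ.map e) - ∫ x, F x ∂(ν.map e)|
            = |(∫ x, F x ∂(μ.map e) - ∫ x, p.eval x ∂(μ.map e))
              - (∫ x, F x ∂(ν.map e) - ∫ x, p.eval x ∂(ν.map e))| := by rw [h6]; ring_nf
          _ ≤ |∫ x, F x ∂(μ.map e) - ∫ x, p.eval x ∂(μ.map e)|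
              + |∫ x, F x ∂(ν.map e) - ∫ x, p.eval x ∂(ν.map e)| := abs_sub _ _
          _ ≤ ε * ((μ.map e) Set.univ).toReal + ε * ((ν.map e) Set.univ).toReal := by
              rw [Real.norm_eq_abs] at h4 h5; linarith
          _ = ε * C := by rw [hC_def]; ring
      refine le_of_forall_pos_le_add ?_
      intro ε' hε'
      have h7 := hbound (ε' / (C + 1)) (by positivity)
      have h8 : ε' / (C + 1) * C ≤ ε' := by
        rw [div_mul_eq_mul_div, div_le_iff₀ (by linarith)]
        nlinarith
      linarith
    rw [lintegral_coe_eq_integral f (hFint _ hμfin), lintegral_coe_eq_integral f (hFint _ hνfin),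
      key]
  -- conclude using injectivity of `e`
  ext s hs
  have h9 : μ s = (μ.map e) (e '' s) := by
    rw [Measure.map_apply emb.measurable (emb.measurableSet_image' hs),
      Set.preimage_image_eq s heinj]
  have h10 : ν s = (ν.map e) (e '' s) := by
    rw [Measure.map_apply emb.measurable (emb.measurableSet_image' hs),
      Set.preimage_image_eq s heinj]
  rw [h9, h10, hmap]

theorem stmt_9 (μ₁ μ₂ : Measure ℝ) [IsFiniteMeasure μ₁] [IsFiniteMeasure μ₂]
    (hs₁ : μ₁ (Set.Iic 0) = 0) (hs₂ : μ₂ (Set.Iic 0) = 0)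
    (s₁ s₂ g₁ g₂ : ℝ → ℝ)
    (hint₁ : ∀ x : ℝ, 1 ≤ x →
      Integrable (fun y => Real.exp y / (1 - Real.exp (-y)) * (s₁ y - Real.exp (-(x * y)))) μ₁)
    (hint₂ : ∀ x : ℝ, 1 ≤ x →
      Integrable (fun y => Real.exp y / (1 - Real.exp (-y)) * (s₂ y - Real.exp (-(x * y)))) μ₂)
    (hg₁ : ∀ x : ℝ, 1 ≤ x →
      g₁ x = ∫ y, Real.exp y / (1 - Real.exp (-y)) * (s₁ y - Real.exp (-(x * y))) ∂μ₁)
    (hg₂ : ∀ x : ℝ, 1 ≤ x →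
      g₂ x = ∫ y, Real.exp y / (1 - Real.exp (-y)) * (s₂ y - Real.exp (-(x * y))) ∂μ₂)
    (c : ℝ) (hc : ∀ k : ℕ, 1 ≤ k → g₁ k - g₂ k = c) :
    μ₁ = μ₂ ∧ ∀ x : ℝ, 1 ≤ x → g₁ x - g₂ x = c := by
  -- the key pointwise difference identity
  have hdiff : ∀ (s : ℝ → ℝ) (n : ℕ) (y : ℝ), 0 < y →
      Real.exp y / (1 - Real.exp (-y)) * (s y - Real.exp (-(((n : ℝ) + 2) * y)))
        - Real.exp y / (1 - Real.exp (-y)) * (s y - Real.exp (-(((n : ℝ) + 1) * y)))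
        = Real.exp (-((n : ℝ) * y)) := by
    intro s n y hy
    have hd : (1 : ℝ) - Real.exp (-y) ≠ 0 := by
      have : Real.exp (-y) < 1 := Real.exp_lt_one_iff.mpr (by linarith)
      linarith
    have h1 : Real.exp (-(((n : ℝ) + 2) * y))
        = Real.exp (-(((n : ℝ) + 1) * y)) * Real.exp (-y) := by
      rw [← Real.exp_add]; congr 1; ring
    have h2 : Real.exp y * Real.exp (-(((n : ℝ) + 1) * y)) = Real.exp (-((n : ℝ) * y)) := by
      rw [← Real.exp_add]; congr 1; ring
    calc Real.exp y / (1 - Real.exp (-y)) * (s y - Real.exp (-(((n : ℝ) + 2) * y)))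
          - Real.exp y / (1 - Real.exp (-y)) * (s y - Real.exp (-(((n : ℝ) + 1) * y)))
        = Real.exp y / (1 - Real.exp (-y))
            * (Real.exp (-(((n : ℝ) + 1) * y)) - Real.exp (-(((n : ℝ) + 2) * y))) := by ring
      _ = Real.exp y / (1 - Real.exp (-y))
            * (Real.exp (-(((n : ℝ) + 1) * y)) * (1 - Real.exp (-y))) := by rw [h1]; ring
      _ = Real.exp y * Real.exp (-(((n : ℝ) + 1) * y)) := by field_simp
      _ = Real.exp (-((n : ℝ) * y)) := h2
  -- computing the Laplace transform as a difference of g-values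
  have hlap : ∀ (μ : Measure ℝ), IsFiniteMeasure μ → ∀ (s g : ℝ → ℝ),
      μ (Set.Iic 0) = 0 →
      (∀ x : ℝ, 1 ≤ x →
        Integrable (fun y => Real.exp y / (1 - Real.exp (-y)) * (s y - Real.exp (-(x * y)))) μ) →
      (∀ x : ℝ, 1 ≤ x →
        g x = ∫ y, Real.exp y / (1 - Real.exp (-y)) * (s y - Real.exp (-(x * y))) ∂μ) →
      ∀ n : ℕ, ∫ y, Real.exp (-((n : ℝ) * y)) ∂μ = g ((n : ℝ) + 2) - g ((n : ℝ) + 1) := by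
    intro μ hμfin s g hμ0 hint hg n
    have h0 : (0 : ℝ) ≤ (n : ℝ) := Nat.cast_nonneg n
    have h1 : (1 : ℝ) ≤ (n : ℝ) + 1 := by linarith
    have h2 : (1 : ℝ) ≤ (n : ℝ) + 2 := by linarith
    rw [hg _ h1, hg _ h2,
      ← integral_sub (hint _ h2) (hint _ h1)]
    refine integral_congr_ae ?_
    filter_upwards [aux_ae_pos hμ0] with y hy
    exact (hdiff s n y hy).symm
  have hmono : ∀ n : ℕ, ∫ y, Real.exp (-((n : ℝ) * y)) ∂μ₁
      = ∫ y, Real.exp (-((n : ℝ) * y)) ∂μ₂ := by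
    intro n
    rw [hlap μ₁ ‹_› s₁ g₁ hs₁ hint₁ hg₁ n, hlap μ₂ ‹_› s₂ g₂ hs₂ hint₂ hg₂ n]
    have ha := hc (n + 2) (by omega)
    have hb := hc (n + 1) (by omega)
    push_cast at ha hb
    linarith
  have hμeq : μ₁ = μ₂ := moments_ext μ₁ μ₂ hs₁ hs₂ hmono
  refine ⟨hμeq, ?_⟩
  -- the difference g₁ x - g₂ x is independent of x
  have hconst : ∀ x : ℝ, 1 ≤ x →
      g₁ x - g₂ x = ∫ y, Real.exp y / (1 - Real.exp (-y)) * (s₁ y - s₂ y) ∂μ₁ := by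
    intro x hx
    have hint₂' : Integrable
        (fun y => Real.exp y / (1 - Real.exp (-y)) * (s₂ y - Real.exp (-(x * y)))) μ₁ := by
      rw [hμeq]; exact hint₂ x hx
    rw [hg₁ x hx, hg₂ x hx, ← hμeq, ← integral_sub (hint₁ x hx) hint₂']
    refine integral_congr_ae (Filter.Eventually.of_forall fun y => ?_)
    ring
  intro x hx
  have h1 : g₁ x - g₂ x = g₁ (1 : ℝ) - g₂ (1 : ℝ) := by
    rw [hconst x hx, hconst 1 le_rfl]
  have h2 := hc 1 le_rfl
  push_cast at h2
  rw [h1]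
  exact h2
end

section
/- Let X be an integrable random variable with distribution function F, and let ρ_k = E[range of k iid copies of X] = ∫_ℝ [1 − F(x)^k − (1−F(x))^k] dx. Then ρ_k = Σ_{j=1}^k (−1)^j C(k,j) ρ_j for all k ≥ 1, and (−1)^{s+1} Δ^s ρ_k = ∫_ℝ [F^k(1−F)^s + F^s(1−F)^k] dx > 0 for a non-degenerate X and all k, s ≥ 1. -/
open MeasureTheory
open scoped ENNReal

lemma binom_pointwise (a b : ℝ) (hab : b = 1 - a) (k : ℕ) (hk : 1 ≤ k) :
    ∑ j ∈ Finset.Icc 1 k, (-1:ℝ)^j * (k.choose j : ℝ) * (1 - a^j - b^j)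
      = 1 - a^k - b^k := by
  have hr : Finset.range (k+1) = insert 0 (Finset.Icc 1 k) := by
    ext j; simp [Finset.mem_range, Finset.mem_Icc]; omega
  have h0 : (0:ℕ) ∉ Finset.Icc 1 k := by simp
  have hfull : ∑ j ∈ Finset.range (k+1), (-1:ℝ)^j * (k.choose j : ℝ) * (1 - a^j - b^j)
      = -(a^k + b^k) := by
    have e1 : ∀ c : ℝ, (-c + 1)^k = ∑ j ∈ Finset.range (k+1), (-c)^j * 1^(k-j) * (k.choose j : ℝ) :=
      fun c => add_pow (-c) 1 k
    have ea := e1 a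
    have eb := e1 b
    have e0 := e1 1
    simp only [one_pow, mul_one] at ea eb e0
    have hba : -a + 1 = b := by linarith
    have hab' : -b + 1 = a := by linarith
    have h11 : (-1 + 1 : ℝ)^k = 0 := by
      rw [neg_add_cancel]; exact zero_pow (by omega)
    rw [hba] at ea; rw [hab'] at eb; rw [h11] at e0
    have expand : ∀ j ∈ Finset.range (k+1),
        (-1:ℝ)^j * (k.choose j : ℝ) * (1 - a^j - b^j)
          = (-1)^j * (k.choose j : ℝ) - (-a)^j * (k.choose j : ℝ) - (-b)^j * (k.choose j : ℝ) := by
      intro j _; rw [neg_pow a, neg_pow b]; ring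
    rw [Finset.sum_congr rfl expand, Finset.sum_sub_distrib, Finset.sum_sub_distrib,
      ← e0, ← ea, ← eb]
    ring
  have := hfull
  rw [hr, Finset.sum_insert h0] at this
  simp at this
  linarith

lemma eq_dirac_of_singleton (P : Measure ℝ) [IsProbabilityMeasure P] (c : ℝ)
    (h : P {c} = 1) : P = Measure.dirac c := by
  have hc : P {c}ᶜ = 0 := by
    have := prob_compl_eq_one_sub (μ := P) (measurableSet_singleton c)
    rw [this, h, tsub_self]
  ext s hs
  rw [Measure.dirac_apply' _ hs]
  by_cases hcs : c ∈ s
  · have h1 : P s ≤ 1 := prob_le_one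
    have h2 : (1:ℝ≥0∞) ≤ P s := h ▸ measure_mono (Set.singleton_subset_iff.2 hcs)
    simp [Set.indicator_of_mem hcs, le_antisymm h1 h2]
  · have : P s = 0 := measure_mono_null (fun x hx => by
      simp only [Set.mem_compl_iff, Set.mem_singleton_iff]
      rintro rfl; exact hcs hx) hc
    rw [Set.indicator_of_notMem hcs, this]

lemma exists_uv (P : Measure ℝ) [IsProbabilityMeasure P]
    (F : ℝ → ℝ) (hF : ∀ x, F x = (P (Set.Iic x)).toReal)
    (hnd : ∀ c : ℝ, P ≠ Measure.dirac c) :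
    ∃ u v : ℝ, u < v ∧ 0 < F u ∧ F v < 1 := by
  have hPof : ∀ x, P (Set.Iic x) = ENNReal.ofReal (F x) := by
    intro x; rw [hF x, ENNReal.ofReal_toReal (measure_ne_top P _)]
  have hF0 : ∀ x, 0 ≤ F x := fun x => by rw [hF x]; exact ENNReal.toReal_nonneg
  have hF1 : ∀ x, F x ≤ 1 := by
    intro x; rw [hF x]
    exact ENNReal.toReal_le_of_le_ofReal zero_le_one (by simp [prob_le_one])
  have hz : ∀ x, F x = 0 → P (Set.Iic x) = 0 := by
    intro x hx; rw [hPof x, hx, ENNReal.ofReal_zero]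
  have ho : ∀ x, F x = 1 → P (Set.Ioi x) = 0 := by
    intro x hx
    have h1 : P (Set.Iic x) = 1 := by rw [hPof x, hx, ENNReal.ofReal_one]
    have := prob_compl_eq_one_sub (μ := P) (measurableSet_Iic (a := x))
    rw [Set.compl_Iic] at this
    rw [this, h1, tsub_self]
  by_contra hcon
  push_neg at hcon
  -- hcon : ∀ u v, u < v → 0 < F u → 1 ≤ F v
  have hex0 : ∃ u, 0 < F u := by
    by_contra hno; push_neg at hno
    have hall : ∀ x : ℝ, P (Set.Iic x) = 0 := fun x => hz x (le_antisymm (hno x) (hF0 x))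
    have huniv : (⋃ n : ℕ, Set.Iic ((n:ℝ))) = Set.univ := by
      ext x; simp only [Set.mem_iUnion, Set.mem_Iic, Set.mem_univ, iff_true]
      exact exists_nat_ge x
    have : P Set.univ = 0 := by
      rw [← huniv]; exact measure_iUnion_null fun n => hall n
    simp [measure_univ] at this
  have hex1 : ∃ v, F v < 1 := by
    by_contra hno; push_neg at hno
    have hall : ∀ x : ℝ, P (Set.Ioi x) = 0 := fun x => ho x (le_antisymm (hF1 x) (hno x))
    have huniv : (⋃ n : ℕ, Set.Ioi (-(n:ℝ))) = Set.univ := by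
      ext x; simp only [Set.mem_iUnion, Set.mem_Ioi, Set.mem_univ, iff_true]
      obtain ⟨n, hn⟩ := exists_nat_gt (-x)
      exact ⟨n, by linarith⟩
    have : P Set.univ = 0 := by
      rw [← huniv]; exact measure_iUnion_null fun n => hall _
    simp [measure_univ] at this
  obtain ⟨u0, hu0⟩ := hex0
  obtain ⟨v0, hv0⟩ := hex1
  set A : Set ℝ := {x | 0 < F x} with hA
  have hAne : A.Nonempty := ⟨u0, hu0⟩
  have hAbdd : BddBelow A := by
    refine ⟨v0, fun x hx => ?_⟩
    by_contra hlt; push_neg at hlt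
    exact absurd (hcon x v0 hlt hx) (not_le.2 hv0)
  set c := sInf A with hc
  have hlow : ∀ x, x < c → F x = 0 := by
    intro x hx
    have : x ∉ A := fun hxA => absurd (csInf_le hAbdd hxA) (not_le.2 hx)
    exact le_antisymm (not_lt.1 this) (hF0 x)
  have hhigh : ∀ x, c < x → F x = 1 := by
    intro x hx
    obtain ⟨u, huA, hux⟩ := exists_lt_of_csInf_lt hAne hx
    exact le_antisymm (hF1 x) (hcon u x hux huA)
  have hIio : P (Set.Iio c) = 0 := by
    have heq : Set.Iio c = ⋃ n : ℕ, Set.Iic (c - ((n:ℝ)+1)⁻¹) := by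
      ext x
      simp only [Set.mem_Iio, Set.mem_iUnion, Set.mem_Iic]
      constructor
      · intro hx
        obtain ⟨n, hn⟩ := exists_nat_one_div_lt (sub_pos.2 hx)
        rw [one_div] at hn
        exact ⟨n, by linarith⟩
      · rintro ⟨n, hn⟩
        have : (0:ℝ) < ((n:ℝ)+1)⁻¹ := by positivity
        linarith
    rw [heq]
    refine measure_iUnion_null fun n => hz _ (hlow _ ?_)
    have : (0:ℝ) < ((n:ℝ)+1)⁻¹ := by positivity
    linarith
  have hIoi : P (Set.Ioi c) = 0 := by
    have heq : Set.Ioi c = ⋃ n : ℕ, Set.Ioi (c + ((n:ℝ)+1)⁻¹) := by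
      ext x
      simp only [Set.mem_Ioi, Set.mem_iUnion]
      constructor
      · intro hx
        obtain ⟨n, hn⟩ := exists_nat_one_div_lt (sub_pos.2 hx)
        rw [one_div] at hn
        exact ⟨n, by linarith⟩
      · rintro ⟨n, hn⟩
        have : (0:ℝ) < ((n:ℝ)+1)⁻¹ := by positivity
        linarith
    rw [heq]
    refine measure_iUnion_null fun n => ho _ (hhigh _ ?_)
    have : (0:ℝ) < ((n:ℝ)+1)⁻¹ := by positivity
    linarith
  have hcompl : P ({c}ᶜ) = 0 := by
    rw [← Set.Iio_union_Ioi]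
    exact measure_union_null hIio hIoi
  have hsing : P {c} = 1 := by
    have := measure_add_measure_compl (μ := P) (measurableSet_singleton c)
    rw [hcompl, add_zero, measure_univ] at this
    exact this
  exact hnd c (eq_dirac_of_singleton P c hsing)

lemma lint_left (P : Measure ℝ) [IsProbabilityMeasure P] (hX : Integrable id P) :
    ∫⁻ x in Set.Iic (0:ℝ), P (Set.Iic x) < ⊤ := by
  set S : Set (ℝ × ℝ) := {p | p.2 ≤ p.1} with hSdef
  have hS : MeasurableSet S := measurableSet_le measurable_snd measurable_fst
  have h1 : ∀ x : ℝ, P (Set.Iic x) = ∫⁻ y, S.indicator 1 (x, y) ∂P := by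
    intro x
    rw [← lintegral_indicator_one (measurableSet_Iic (a := x))]
    refine lintegral_congr fun y => ?_
    simp [Set.indicator, hSdef, Set.mem_Iic]
  have hswap :
      ∫⁻ x in Set.Iic (0:ℝ), ∫⁻ y, S.indicator 1 (x, y) ∂P
        = ∫⁻ y, (∫⁻ x in Set.Iic (0:ℝ), S.indicator 1 (x, y)) ∂P := by
    exact lintegral_lintegral_swap (f := fun x y => S.indicator 1 (x, y))
      ((measurable_one.indicator hS).aemeasurable)
  calc ∫⁻ x in Set.Iic (0:ℝ), P (Set.Iic x)
      = ∫⁻ x in Set.Iic (0:ℝ), ∫⁻ y, S.indicator 1 (x, y) ∂P :=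
        lintegral_congr fun x => h1 x
    _ = ∫⁻ y, (∫⁻ x in Set.Iic (0:ℝ), S.indicator 1 (x, y)) ∂P := hswap
    _ ≤ ∫⁻ y, (‖y‖₊ : ℝ≥0∞) ∂P := by
        refine lintegral_mono fun y => ?_
        have hin : ∀ x : ℝ, S.indicator (1 : ℝ × ℝ → ℝ≥0∞) (x, y)
            = (Set.Ici y).indicator 1 x := by
          intro x; simp [Set.indicator, hSdef, Set.mem_Ici]
        calc ∫⁻ x in Set.Iic (0:ℝ), S.indicator 1 (x, y)
            = ∫⁻ x in Set.Iic (0:ℝ), (Set.Ici y).indicator 1 x :=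
              lintegral_congr fun x => hin x
          _ = volume (Set.Ici y ∩ Set.Iic 0) := by
              rw [lintegral_indicator_one (measurableSet_Ici),
                Measure.restrict_apply (measurableSet_Ici)]
          _ ≤ (‖y‖₊ : ℝ≥0∞) := by
              rw [Set.Ici_inter_Iic, Real.volume_Icc, ← enorm_eq_nnnorm, Real.enorm_eq_ofReal_abs]
              exact ENNReal.ofReal_le_ofReal (by rw [zero_sub]; exact neg_le_abs y)
    _ < ⊤ := by
        have := hX.2
        simpa [HasFiniteIntegral, id, enorm_eq_nnnorm] using this

lemma lint_right (P : Measure ℝ) [IsProbabilityMeasure P] (hX : Integrable id P) :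
    ∫⁻ x in Set.Ici (0:ℝ), P (Set.Ioi x) < ⊤ := by
  set S : Set (ℝ × ℝ) := {p | p.1 < p.2} with hSdef
  have hS : MeasurableSet S := measurableSet_lt measurable_fst measurable_snd
  have h1 : ∀ x : ℝ, P (Set.Ioi x) = ∫⁻ y, S.indicator 1 (x, y) ∂P := by
    intro x
    rw [← lintegral_indicator_one (measurableSet_Ioi (a := x))]
    refine lintegral_congr fun y => ?_
    simp [Set.indicator, hSdef, Set.mem_Ioi]
  have hswap :
      ∫⁻ x in Set.Ici (0:ℝ), ∫⁻ y, S.indicator 1 (x, y) ∂P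
        = ∫⁻ y, (∫⁻ x in Set.Ici (0:ℝ), S.indicator 1 (x, y)) ∂P := by
    exact lintegral_lintegral_swap (f := fun x y => S.indicator 1 (x, y))
      ((measurable_one.indicator hS).aemeasurable)
  calc ∫⁻ x in Set.Ici (0:ℝ), P (Set.Ioi x)
      = ∫⁻ x in Set.Ici (0:ℝ), ∫⁻ y, S.indicator 1 (x, y) ∂P :=
        lintegral_congr fun x => h1 x
    _ = ∫⁻ y, (∫⁻ x in Set.Ici (0:ℝ), S.indicator 1 (x, y)) ∂P := hswap
    _ ≤ ∫⁻ y, (‖y‖₊ : ℝ≥0∞) ∂P := by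
        refine lintegral_mono fun y => ?_
        have hin : ∀ x : ℝ, S.indicator (1 : ℝ × ℝ → ℝ≥0∞) (x, y)
            = (Set.Iio y).indicator 1 x := by
          intro x; simp [Set.indicator, hSdef, Set.mem_Iio]
        calc ∫⁻ x in Set.Ici (0:ℝ), S.indicator 1 (x, y)
            = ∫⁻ x in Set.Ici (0:ℝ), (Set.Iio y).indicator 1 x :=
              lintegral_congr fun x => hin x
          _ = volume (Set.Iio y ∩ Set.Ici 0) := by
              rw [lintegral_indicator_one (measurableSet_Iio),
                Measure.restrict_apply (measurableSet_Iio)]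
          _ ≤ (‖y‖₊ : ℝ≥0∞) := by
              rw [Set.inter_comm, Set.Ici_inter_Iio, Real.volume_Ico,
                ← enorm_eq_nnnorm, Real.enorm_eq_ofReal_abs]
              exact ENNReal.ofReal_le_ofReal (by rw [sub_zero]; exact le_abs_self y)
    _ < ⊤ := by
        have := hX.2
        simpa [HasFiniteIntegral, id, enorm_eq_nnnorm] using this

lemma integrable_min_cdf (P : Measure ℝ) [IsProbabilityMeasure P] (hX : Integrable id P)
    (F : ℝ → ℝ) (hF : ∀ x, F x = (P (Set.Iic x)).toReal) :
    Integrable (fun x => min (F x) (1 - F x)) := by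
  have hPof : ∀ x, P (Set.Iic x) = ENNReal.ofReal (F x) := by
    intro x; rw [hF x, ENNReal.ofReal_toReal (measure_ne_top P _)]
  have hPoi : ∀ x, P (Set.Ioi x) = ENNReal.ofReal (1 - F x) := by
    intro x
    have h2 := prob_compl_eq_one_sub (μ := P) (measurableSet_Iic (a := x))
    rw [Set.compl_Iic] at h2
    rw [h2, hPof x, ← ENNReal.ofReal_one, ← ENNReal.ofReal_sub _ (hF x ▸ ENNReal.toReal_nonneg)]
  have hF0 : ∀ x, 0 ≤ F x := fun x => by rw [hF x]; exact ENNReal.toReal_nonneg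
  have hF1 : ∀ x, F x ≤ 1 := by
    intro x; rw [hF x]
    exact ENNReal.toReal_le_of_le_ofReal zero_le_one (by simp [prob_le_one])
  have hFmono : Monotone F := by
    intro x y hxy
    rw [hF x, hF y]
    exact ENNReal.toReal_mono (measure_ne_top P _) (measure_mono (Set.Iic_subset_Iic.2 hxy))
  have hFmeas : Measurable F := hFmono.measurable
  set g : ℝ → ℝ := fun x => min (F x) (1 - F x) with hgdef
  have hg0 : ∀ x, 0 ≤ g x := fun x => le_min (hF0 x) (by linarith [hF1 x])
  have hgmeas : Measurable g := hFmeas.min (measurable_const.sub hFmeas)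
  refine ⟨hgmeas.aestronglyMeasurable, ?_⟩
  have hnorm : ∀ x, (‖g x‖₊ : ℝ≥0∞) = ENNReal.ofReal (g x) := fun x =>
    Real.enorm_eq_ofReal (hg0 x)
  rw [hasFiniteIntegral_iff_norm]
  rw [← lintegral_add_compl (fun x => ENNReal.ofReal ‖g x‖) (measurableSet_Iic (a := (0:ℝ)))]
  have hbound1 : ∀ x : ℝ, ENNReal.ofReal ‖g x‖ ≤ P (Set.Iic x) := by
    intro x
    rw [Real.norm_of_nonneg (hg0 x), hPof x]
    exact ENNReal.ofReal_le_ofReal (min_le_left _ _)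
  have hbound2 : ∀ x : ℝ, ENNReal.ofReal ‖g x‖ ≤ P (Set.Ioi x) := by
    intro x
    rw [Real.norm_of_nonneg (hg0 x), hPoi x]
    exact ENNReal.ofReal_le_ofReal (min_le_right _ _)
  refine ENNReal.add_lt_top.2 ⟨lt_of_le_of_lt ?_ (lint_left P hX), lt_of_le_of_lt ?_ (lint_right P hX)⟩
  · exact lintegral_mono fun x => hbound1 x
  · rw [Set.compl_Iic]
    calc ∫⁻ x in Set.Ioi (0:ℝ), ENNReal.ofReal ‖g x‖
        ≤ ∫⁻ x in Set.Ioi (0:ℝ), P (Set.Ioi x) := lintegral_mono fun x => hbound2 x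
      _ ≤ ∫⁻ x in Set.Ici (0:ℝ), P (Set.Ioi x) := lintegral_mono_set Set.Ioi_subset_Ici_self

theorem stmt_17 (P : Measure ℝ) [IsProbabilityMeasure P]
    (hX : Integrable id P)
    (F : ℝ → ℝ) (hF : ∀ x, F x = (P (Set.Iic x)).toReal)
    (ρ : ℕ → ℝ)
    (hρ : ∀ k : ℕ, 1 ≤ k → ρ k = ∫ x : ℝ, (1 - F x ^ k - (1 - F x) ^ k)) :
    (∀ k : ℕ, 1 ≤ k →
        ρ k = ∑ j ∈ Finset.Icc 1 k, (-1 : ℝ) ^ j * (k.choose j : ℝ) * ρ j)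
      ∧ ((∀ c : ℝ, P ≠ Measure.dirac c) → ∀ k s : ℕ, 1 ≤ k → 1 ≤ s →
          (-1 : ℝ) ^ (s + 1) * fdiff^[s] ρ k
            = (∫ x : ℝ, (F x ^ k * (1 - F x) ^ s + F x ^ s * (1 - F x) ^ k))
          ∧ 0 < (-1 : ℝ) ^ (s + 1) * fdiff^[s] ρ k) := by
  have hF0 : ∀ x, 0 ≤ F x := fun x => by rw [hF x]; exact ENNReal.toReal_nonneg
  have hF1 : ∀ x, F x ≤ 1 := by
    intro x; rw [hF x]
    exact ENNReal.toReal_le_of_le_ofReal zero_le_one (by simp [prob_le_one])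
  have hFmono : Monotone F := by
    intro x y hxy
    rw [hF x, hF y]
    exact ENNReal.toReal_mono (measure_ne_top P _) (measure_mono (Set.Iic_subset_Iic.2 hxy))
  have hFmeas : Measurable F := hFmono.measurable
  have hg : Integrable (fun x => min (F x) (1 - F x)) := integrable_min_cdf P hX F hF
  have hg0 : ∀ x, 0 ≤ min (F x) (1 - F x) := fun x =>
    le_min (hF0 x) (by linarith [hF1 x])
  -- pointwise bounds
  have hGpt : ∀ (k : ℕ), 1 ≤ k → ∀ x : ℝ,
      0 ≤ 1 - F x ^ k - (1 - F x) ^ k ∧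
      1 - F x ^ k - (1 - F x) ^ k ≤ (k : ℝ) * min (F x) (1 - F x) := by
    intro k hk x
    set a := F x
    have ha0 : 0 ≤ a := hF0 x
    have ha1 : a ≤ 1 := hF1 x
    have hb0 : (0:ℝ) ≤ 1 - a := by linarith
    have hak : a ^ k ≤ a := pow_le_of_le_one ha0 ha1 (by omega)
    have hbk : (1-a) ^ k ≤ 1 - a := pow_le_of_le_one hb0 (by linarith) (by omega)
    have hak0 : 0 ≤ a ^ k := pow_nonneg ha0 k
    have hbk0 : 0 ≤ (1-a) ^ k := pow_nonneg hb0 k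
    have hbern1 : 1 - (k:ℝ) * (1 - a) ≤ a ^ k := by
      have := one_add_mul_le_pow (a := a - 1) (by linarith) k
      calc 1 - (k:ℝ) * (1-a) = 1 + (k:ℝ) * (a - 1) := by ring
        _ ≤ (1 + (a - 1)) ^ k := this
        _ = a ^ k := by ring_nf
    have hbern2 : 1 - (k:ℝ) * a ≤ (1-a) ^ k := by
      have := one_add_mul_le_pow (a := -a) (by linarith) k
      calc 1 - (k:ℝ) * a = 1 + (k:ℝ) * (-a) := by ring
        _ ≤ (1 + -a) ^ k := this
        _ = (1-a) ^ k := by ring_nf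
    constructor
    · linarith
    · rcases le_total a (1-a) with h | h
      · rw [min_eq_left h]; linarith
      · rw [min_eq_right h]; linarith
  have hφpt : ∀ (k s : ℕ), 1 ≤ k → 1 ≤ s → ∀ x : ℝ,
      0 ≤ F x ^ k * (1 - F x) ^ s + F x ^ s * (1 - F x) ^ k ∧
      F x ^ k * (1 - F x) ^ s + F x ^ s * (1 - F x) ^ k ≤ 2 * min (F x) (1 - F x) := by
    intro k s hk hs x
    set a := F x
    have ha0 : 0 ≤ a := hF0 x
    have ha1 : a ≤ 1 := hF1 x
    have hb0 : (0:ℝ) ≤ 1 - a := by linarith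
    have hb1 : (1:ℝ) - a ≤ 1 := by linarith
    have h1 : ∀ m n : ℕ, 1 ≤ m → 1 ≤ n → a ^ m * (1-a) ^ n ≤ min a (1-a) := by
      intro m n hm hn
      have h2 : a ^ m * (1-a) ^ n ≤ a * (1-a) :=
        mul_le_mul (pow_le_of_le_one ha0 ha1 (by omega))
          (pow_le_of_le_one hb0 hb1 (by omega)) (pow_nonneg hb0 n) ha0
      refine h2.trans (le_min ?_ ?_)
      · nlinarith
      · nlinarith
    constructor
    · positivity
    · have t1 := h1 k s hk hs
      have t2 := h1 s k hs hk
      linarith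
  -- integrability of the integrands
  have hIntG : ∀ k : ℕ, 1 ≤ k → Integrable (fun x => 1 - F x ^ k - (1 - F x) ^ k) := by
    intro k hk
    refine Integrable.mono (hg.const_mul (k : ℝ))
      (((measurable_const.sub (hFmeas.pow_const k)).sub
        ((measurable_const.sub hFmeas).pow_const k)).aestronglyMeasurable)
      (ae_of_all _ fun x => ?_)
    obtain ⟨h1, h2⟩ := hGpt k hk x
    rw [Real.norm_of_nonneg h1, Real.norm_of_nonneg (mul_nonneg (Nat.cast_nonneg k) (hg0 x))]
    exact h2
  have hIntφ : ∀ k s : ℕ, 1 ≤ k → 1 ≤ s →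
      Integrable (fun x => F x ^ k * (1 - F x) ^ s + F x ^ s * (1 - F x) ^ k) := by
    intro k s hk hs
    refine Integrable.mono (hg.const_mul 2)
      ((((hFmeas.pow_const k).mul ((measurable_const.sub hFmeas).pow_const s)).add
        ((hFmeas.pow_const s).mul ((measurable_const.sub hFmeas).pow_const k))).aestronglyMeasurable)
      (ae_of_all _ fun x => ?_)
    obtain ⟨h1, h2⟩ := hφpt k s hk hs x
    rw [Real.norm_of_nonneg h1, Real.norm_of_nonneg (mul_nonneg (by norm_num) (hg0 x))]
    exact h2
  constructor
  · -- Part 1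
    intro k hk
    rw [hρ k hk]
    have hpt : (fun x : ℝ => 1 - F x ^ k - (1 - F x) ^ k)
        = fun x : ℝ => ∑ j ∈ Finset.Icc 1 k,
            (-1:ℝ)^j * (k.choose j : ℝ) * (1 - F x ^ j - (1 - F x) ^ j) := by
      funext x
      exact (binom_pointwise (F x) (1 - F x) rfl k hk).symm
    rw [hpt]
    rw [integral_finset_sum _ (fun j hj => by
      have hj1 : 1 ≤ j := (Finset.mem_Icc.1 hj).1
      exact (hIntG j hj1).const_mul _)]
    refine Finset.sum_congr rfl fun j hj => ?_
    have hj1 : 1 ≤ j := (Finset.mem_Icc.1 hj).1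
    rw [integral_const_mul, hρ j hj1]
  · -- Part 2
    intro hnd k s hk hs
    have hmain : ∀ s : ℕ, 1 ≤ s → ∀ k : ℕ, 1 ≤ k →
        fdiff^[s] ρ k
          = (-1:ℝ)^(s+1) * ∫ x : ℝ, (F x ^ k * (1 - F x) ^ s + F x ^ s * (1 - F x) ^ k) := by
      intro s hs
      induction s, hs using Nat.le_induction with
      | base =>
        intro k hk
        rw [Function.iterate_one]
        show ρ (k+1) - ρ k = _
        rw [hρ (k+1) (by omega), hρ k hk,
          ← integral_sub (hIntG (k+1) (by omega)) (hIntG k hk)]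
        have hpt : (fun x : ℝ => (1 - F x ^ (k+1) - (1 - F x) ^ (k+1))
              - (1 - F x ^ k - (1 - F x) ^ k))
            = fun x : ℝ => F x ^ k * (1 - F x) ^ 1 + F x ^ 1 * (1 - F x) ^ k := by
          funext x; ring
        rw [hpt]
        norm_num
      | succ s hs IH =>
        intro k hk
        rw [Function.iterate_succ_apply']
        show fdiff^[s] ρ (k+1) - fdiff^[s] ρ k = _
        rw [IH (k+1) (by omega), IH k hk,
          ← mul_sub, ← integral_sub (hIntφ (k+1) s (by omega) hs) (hIntφ k s hk hs)]
        have hpt : (fun x : ℝ => (F x ^ (k+1) * (1 - F x) ^ s + F x ^ s * (1 - F x) ^ (k+1))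
              - (F x ^ k * (1 - F x) ^ s + F x ^ s * (1 - F x) ^ k))
            = fun x : ℝ => -(F x ^ k * (1 - F x) ^ (s+1) + F x ^ (s+1) * (1 - F x) ^ k) := by
          funext x; ring
        rw [hpt, integral_neg]
        ring
    have hsq : ((-1:ℝ)^(s+1)) * ((-1:ℝ)^(s+1)) = 1 := by
      rw [← pow_add]
      exact Even.neg_one_pow ⟨s+1, by ring⟩
    have heq : (-1 : ℝ) ^ (s + 1) * fdiff^[s] ρ k
        = ∫ x : ℝ, (F x ^ k * (1 - F x) ^ s + F x ^ s * (1 - F x) ^ k) := by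
      rw [hmain s hs k hk, ← mul_assoc, hsq, one_mul]
    refine ⟨heq, ?_⟩
    rw [heq]
    refine (integral_pos_iff_support_of_nonneg
      (fun x => (hφpt k s hk hs x).1) (hIntφ k s hk hs)).2 ?_
    obtain ⟨u, v, huv, hu, hv⟩ := exists_uv P F hF hnd
    have hsub : Set.Icc u v ⊆ Function.support
        (fun x => F x ^ k * (1 - F x) ^ s + F x ^ s * (1 - F x) ^ k) := by
      intro x hx
      obtain ⟨hxu, hxv⟩ := Set.mem_Icc.1 hx
      have hFx0 : 0 < F x := lt_of_lt_of_le hu (hFmono hxu)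
      have hFx1 : F x < 1 := lt_of_le_of_lt (hFmono hxv) hv
      have hb : 0 < 1 - F x := by linarith
      have : 0 < F x ^ k * (1 - F x) ^ s + F x ^ s * (1 - F x) ^ k := by positivity
      exact ne_of_gt this
    calc (0:ℝ≥0∞) < ENNReal.ofReal (v - u) := ENNReal.ofReal_pos.2 (by linarith)
      _ = volume (Set.Icc u v) := (Real.volume_Icc).symm
      _ ≤ volume (Function.support _) := measure_mono hsub
end

section
/- Let X and Y be integrable random variables with left-continuous quantile functions F_X^{-1}, F_Y^{-1} on (0,1). Then E R_k(X) = E R_k(Y) for all k ≥ 1 if and only if the function h(u) = F_X^{-1}(u) − F_Y^{-1}(u) satisfies h(u) = h(1−u) for almost every u ∈ (0,1). -/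
set_option linter.unusedSectionVars false
set_option linter.unusedVariables false

open MeasureTheory ProbabilityTheory Set Filter

namespace Stmt18Aux

noncomputable def qf (μ : Measure ℝ) (u : ℝ) : ℝ := sInf {x : ℝ | u ≤ cdf μ x}

variable (μ : Measure ℝ) [IsProbabilityMeasure μ]

lemma qf_set_nonempty {u : ℝ} (hu : u < 1) : {x : ℝ | u ≤ cdf μ x}.Nonempty := by
  obtain ⟨x, hx⟩ := ((tendsto_cdf_atTop μ).eventually (eventually_ge_nhds hu)).exists
  exact ⟨x, hx⟩

lemma qf_set_bddBelow {u : ℝ} (hu : 0 < u) : BddBelow {x : ℝ | u ≤ cdf μ x} := by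
  obtain ⟨x, hx⟩ := ((tendsto_cdf_atBot μ).eventually (eventually_lt_nhds hu)).exists
  refine ⟨x, fun y hy => ?_⟩
  by_contra hxy
  exact absurd (le_trans hy (monotone_cdf μ (le_of_not_ge hxy))) (not_le.mpr hx)

lemma qf_le_iff {u : ℝ} (hu : u ∈ Ioo (0:ℝ) 1) (x : ℝ) :
    qf μ u ≤ x ↔ u ≤ cdf μ x := by
  constructor
  · intro h
    have key : ∀ y ∈ Ioi x, u ≤ cdf μ y := by
      intro y hy
      obtain ⟨z, hz, hzy⟩ := (csInf_lt_iff (qf_set_bddBelow μ hu.1)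
        (qf_set_nonempty μ hu.2)).mp (lt_of_le_of_lt h hy)
      exact hz.trans (monotone_cdf μ hzy.le)
    have htd : Tendsto (cdf μ) (nhdsWithin x (Ioi x)) (nhds (cdf μ x)) :=
      ((cdf μ).right_continuous x).mono_left (nhdsWithin_mono x Ioi_subset_Ici_self)
    exact ge_of_tendsto htd (eventually_nhdsWithin_of_forall key)
  · intro h
    exact csInf_le (qf_set_bddBelow μ hu.1) h

lemma qf_mono : MonotoneOn (qf μ) (Ioo (0:ℝ) 1) := fun u hu v hv huv =>
  csInf_le_csInf (qf_set_bddBelow μ hu.1) (qf_set_nonempty μ hv.2)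
    (fun _ hx => le_trans huv hx)

lemma qf_aemeasurable : AEMeasurable (qf μ) (volume.restrict (Ioo (0:ℝ) 1)) :=
  aemeasurable_restrict_of_monotoneOn measurableSet_Ioo (qf_mono μ)

lemma vol_inter {c : ℝ} (h0 : 0 ≤ c) (h1 : c ≤ 1) :
    volume (Ioo (0:ℝ) 1 ∩ Iic c) = ENNReal.ofReal c := by
  rcases eq_or_lt_of_le h1 with rfl | h1
  · rw [inter_eq_left.mpr (fun u hu => hu.2.le), Real.volume_Ioo]
    norm_num
  · have : Ioo (0:ℝ) 1 ∩ Iic c = Ioc 0 c := by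
      ext u
      simp only [mem_inter_iff, mem_Ioo, mem_Iic, mem_Ioc]
      constructor
      · rintro ⟨⟨h1, _⟩, h3⟩; exact ⟨h1, h3⟩
      · rintro ⟨ha, hb⟩; exact ⟨⟨ha, lt_of_le_of_lt hb h1⟩, hb⟩
    rw [this, Real.volume_Ioc, sub_zero]

instance : IsProbabilityMeasure (volume.restrict (Ioo (0:ℝ) 1)) := by
  constructor
  rw [Measure.restrict_apply_univ, Real.volume_Ioo]
  norm_num

lemma map_qf : (volume.restrict (Ioo (0:ℝ) 1)).map (qf μ) = μ := by
  have hae := qf_aemeasurable μ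
  haveI : IsProbabilityMeasure ((volume.restrict (Ioo (0:ℝ) 1)).map (qf μ)) :=
    Measure.isProbabilityMeasure_map hae
  refine Measure.ext_of_Iic _ _ (fun x => ?_)
  rw [Measure.map_apply_of_aemeasurable hae measurableSet_Iic,
    Measure.restrict_apply' measurableSet_Ioo, inter_comm]
  have hpre : Ioo (0:ℝ) 1 ∩ qf μ ⁻¹' Iic x = Ioo 0 1 ∩ Iic (cdf μ x) := by
    ext u
    simp only [mem_inter_iff, mem_preimage, mem_Iic]
    exact and_congr_right fun hu => qf_le_iff μ hu x
  rw [hpre, vol_inter (cdf_nonneg μ x) (cdf_le_one μ x), ofReal_cdf]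

lemma integrable_qf (h : Integrable id μ) :
    Integrable (qf μ) (volume.restrict (Ioo (0:ℝ) 1)) := by
  rw [← map_qf μ] at h
  have := (integrable_map_measure h.aestronglyMeasurable (qf_aemeasurable μ)).mp h
  simpa [Function.comp] using this

end Stmt18Aux

namespace Stmt18Aux2

lemma one_sub_emb : MeasurableEmbedding (fun x : ℝ => 1 - x) := by
  have : (fun x : ℝ => 1 - x) = (Homeomorph.subLeft (1:ℝ)) := rfl
  rw [this]
  exact (Homeomorph.subLeft (1:ℝ)).measurableEmbedding

lemma one_sub_pre : (fun x : ℝ => 1 - x) ⁻¹' (Ioo (0:ℝ) 1) = Ioo 0 1 := by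
  ext u
  simp only [mem_preimage, mem_Ioo]
  constructor <;> rintro ⟨h1, h2⟩ <;> constructor <;> linarith

lemma one_sub_mp : MeasurePreserving (fun x : ℝ => 1 - x)
    (volume.restrict (Ioo (0:ℝ) 1)) (volume.restrict (Ioo (0:ℝ) 1)) := by
  have := (Measure.measurePreserving_sub_left (volume : Measure ℝ) 1).restrict_preimage
    (measurableSet_Ioo (a := (0:ℝ)) (b := 1))
  rwa [one_sub_pre] at this

lemma sub_symm (f : ℝ → ℝ) :
    ∫ u in Ioo (0:ℝ) 1, f (1 - u) = ∫ u in Ioo (0:ℝ) 1, f u := by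
  have := (Measure.measurePreserving_sub_left (volume : Measure ℝ) 1).setIntegral_preimage_emb
    one_sub_emb f (Ioo 0 1)
  rwa [one_sub_pre] at this

lemma integrable_comp_one_sub {f : ℝ → ℝ}
    (hf : Integrable f (volume.restrict (Ioo (0:ℝ) 1))) :
    Integrable (fun u => f (1 - u)) (volume.restrict (Ioo (0:ℝ) 1)) :=
  (one_sub_mp.integrable_comp_emb one_sub_emb).mpr hf

lemma pow_bdd (n : ℕ) :
    ∀ᵐ u ∂(volume.restrict (Ioo (0:ℝ) 1)), ‖u ^ n‖ ≤ 1 := by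
  filter_upwards [ae_restrict_mem measurableSet_Ioo] with u hu
  rw [Real.norm_eq_abs, abs_pow, abs_of_pos hu.1]
  exact pow_le_one₀ hu.1.le hu.2.le

lemma integrable_pow_mul {f : ℝ → ℝ} (n : ℕ)
    (hf : Integrable f (volume.restrict (Ioo (0:ℝ) 1))) :
    Integrable (fun u => u ^ n * f u) (volume.restrict (Ioo (0:ℝ) 1)) :=
  hf.bdd_mul ((measurable_id.pow_const n).aestronglyMeasurable) (pow_bdd n)

lemma integrable_one_sub_pow_mul {f : ℝ → ℝ} (n : ℕ)
    (hf : Integrable f (volume.restrict (Ioo (0:ℝ) 1))) :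
    Integrable (fun u => (1 - u) ^ n * f u) (volume.restrict (Ioo (0:ℝ) 1)) :=
  hf.bdd_mul (((measurable_const.sub measurable_id').pow_const n).aestronglyMeasurable)
    (c := 1) (by
      filter_upwards [ae_restrict_mem measurableSet_Ioo] with u hu
      rw [Real.norm_eq_abs, abs_pow, abs_of_pos (by linarith [hu.2] : (0:ℝ) < 1 - u)]
      exact pow_le_one₀ (by linarith [hu.2]) (by linarith [hu.1]))

lemma integrable_phi_mul {f : ℝ → ℝ} (n : ℕ)
    (hf : Integrable f (volume.restrict (Ioo (0:ℝ) 1))) :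
    Integrable (fun u => (u ^ n - (1 - u) ^ n) * f u) (volume.restrict (Ioo (0:ℝ) 1)) := by
  have := (integrable_pow_mul n hf).sub (integrable_one_sub_pow_mul n hf)
  refine this.congr (ae_of_all _ fun u => ?_)
  simp only [Pi.sub_apply]
  ring

lemma ae_zero_of_moments (f : ℝ → ℝ)
    (hf : Integrable f (volume.restrict (Ioo (0:ℝ) 1)))
    (hm : ∀ n : ℕ, ∫ u in Ioo (0:ℝ) 1, u ^ n * f u = 0) :
    ∀ᵐ u ∂(volume.restrict (Ioo (0:ℝ) 1)), f u = 0 := by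
  set G := (Ioo (0:ℝ) 1).indicator f with hGdef
  have hG : Integrable G volume := (integrable_indicator_iff measurableSet_Ioo).mpr hf
  have hident : ∀ (p : Polynomial ℝ) (u : ℝ), p.eval u * f u
      = ∑ i ∈ Finset.range (p.natDegree + 1), p.coeff i * (u ^ i * f u) := by
    intro p u
    rw [Polynomial.eval_eq_sum_range, Finset.sum_mul]
    exact Finset.sum_congr rfl fun i _ => by ring
  have hpoly : ∀ p : Polynomial ℝ, ∫ u in Ioo (0:ℝ) 1, p.eval u * f u = 0 := by
    intro p
    rw [integral_congr_ae (ae_of_all _ (hident p)),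
      integral_finset_sum _ (fun i _ => (integrable_pow_mul i hf).const_mul _)]
    simp [integral_const_mul, hm]
  have hpolyint : ∀ p : Polynomial ℝ,
      Integrable (fun u => p.eval u * f u) (volume.restrict (Ioo (0:ℝ) 1)) := by
    intro p
    have : Integrable (fun u => ∑ i ∈ Finset.range (p.natDegree + 1),
        p.coeff i * (u ^ i * f u)) (volume.restrict (Ioo (0:ℝ) 1)) :=
      integrable_finset_sum _ (fun i _ => (integrable_pow_mul i hf).const_mul _)
    exact this.congr (ae_of_all _ fun u => (hident p u).symm)
  have habs : (0:ℝ) ≤ ∫ u in Ioo (0:ℝ) 1, |f u| :=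
    integral_nonneg fun u => abs_nonneg _
  have hcont : ∀ φ : ℝ → ℝ, Continuous φ → ∫ u in Ioo (0:ℝ) 1, φ u * f u = 0 := by
    intro φ hφ
    set C := (∫ u in Ioo (0:ℝ) 1, |f u|) + 1 with hC
    have hCpos : 0 < C := by linarith
    have key : ∀ ε : ℝ, 0 < ε → |∫ u in Ioo (0:ℝ) 1, φ u * f u| ≤ ε * C := by
      intro ε hε
      obtain ⟨p, hp⟩ := exists_polynomial_near_of_continuousOn 0 1 φ hφ.continuousOn ε hε
      have hint1 : Integrable (fun u => (φ u - p.eval u) * f u)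
          (volume.restrict (Ioo (0:ℝ) 1)) :=
        hf.bdd_mul ((hφ.sub p.continuous_aeval).aestronglyMeasurable) (c := ε) (by
          filter_upwards [ae_restrict_mem measurableSet_Ioo] with u hu
          rw [Real.norm_eq_abs, ← abs_neg, neg_sub]
          exact (hp u ⟨hu.1.le, hu.2.le⟩).le)
      have hsplit : ∫ u in Ioo (0:ℝ) 1, φ u * f u
          = ∫ u in Ioo (0:ℝ) 1, ((φ u - p.eval u) * f u + p.eval u * f u) := by
        refine integral_congr_ae (ae_of_all _ fun u => ?_)
        ring
      rw [hsplit, integral_add hint1 (hpolyint p), hpoly p, add_zero]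
      have hb : ‖∫ u in Ioo (0:ℝ) 1, (φ u - p.eval u) * f u‖
          ≤ ∫ u in Ioo (0:ℝ) 1, ε * |f u| := by
        refine norm_integral_le_of_norm_le (hf.abs.const_mul ε) ?_
        filter_upwards [ae_restrict_mem measurableSet_Ioo] with u hu
        rw [Real.norm_eq_abs, abs_mul]
        refine mul_le_mul_of_nonneg_right ?_ (abs_nonneg _)
        rw [← abs_neg, neg_sub]
        exact (hp u ⟨hu.1.le, hu.2.le⟩).le
      rw [Real.norm_eq_abs, integral_const_mul] at hb
      calc |∫ u in Ioo (0:ℝ) 1, (φ u - p.eval u) * f u|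
          ≤ ε * ∫ u in Ioo (0:ℝ) 1, |f u| := hb
        _ ≤ ε * C := by rw [hC]; nlinarith
    by_contra hne
    have hpos : 0 < |∫ u in Ioo (0:ℝ) 1, φ u * f u| := abs_pos.mpr hne
    have h1 := key (|∫ u in Ioo (0:ℝ) 1, φ u * f u| / (2 * C)) (by positivity)
    have h2 : |∫ u in Ioo (0:ℝ) 1, φ u * f u| / (2 * C) * C
        = |∫ u in Ioo (0:ℝ) 1, φ u * f u| / 2 := by
      field_simp
    rw [h2] at h1
    linarith
  have hsm : ∀ φ : ℝ → ℝ, ContDiff ℝ (↑(⊤ : ℕ∞)) φ → HasCompactSupport φ →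
      ∫ x, φ x • G x = 0 := by
    intro φ hφ _
    have hGi : ∫ x, φ x • G x ∂volume = ∫ u in Ioo (0:ℝ) 1, φ u * f u := by
      rw [← integral_indicator measurableSet_Ioo]
      congr 1
      ext u
      by_cases hu : u ∈ Ioo (0:ℝ) 1 <;> simp [hGdef, indicator, hu]
    rw [hGi]
    exact hcont φ hφ.continuous
  have hG0 : ∀ᵐ x ∂(volume : Measure ℝ), G x = 0 :=
    ae_eq_zero_of_integral_contDiff_smul_eq_zero hG.locallyIntegrable hsm
  filter_upwards [ae_restrict_of_ae hG0, ae_restrict_mem measurableSet_Ioo] with u h1 h2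
  rwa [hGdef, indicator_of_mem h2] at h1

end Stmt18Aux2

set_option maxHeartbeats 2000000 in
open Stmt18Aux Stmt18Aux2 in
theorem stmt_18 (P Q : Measure ℝ) [IsProbabilityMeasure P] [IsProbabilityMeasure Q]
    (hP : Integrable id P) (hQ : Integrable id Q)
    (FX FY QX QY : ℝ → ℝ)
    (hFX : ∀ x, FX x = (P (Set.Iic x)).toReal)
    (hFY : ∀ x, FY x = (Q (Set.Iic x)).toReal)
    (hQX : ∀ u ∈ Set.Ioo (0 : ℝ) 1, QX u = sInf {x : ℝ | u ≤ FX x})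
    (hQY : ∀ u ∈ Set.Ioo (0 : ℝ) 1, QY u = sInf {x : ℝ | u ≤ FY x}) :
    (∀ k : ℕ, 1 ≤ k →
        (k : ℝ) * ∫ u in Set.Ioo (0 : ℝ) 1, (u ^ (k - 1) - (1 - u) ^ (k - 1)) * QX u
          = (k : ℝ) * ∫ u in Set.Ioo (0 : ℝ) 1, (u ^ (k - 1) - (1 - u) ^ (k - 1)) * QY u)
      ↔ (∀ᵐ u ∂(volume.restrict (Set.Ioo (0 : ℝ) 1)),
          QX u - QY u = QX (1 - u) - QY (1 - u)) := by
  classical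
  -- identify QX, QY with the canonical quantile functions a.e. on (0,1)
  have hXae : QX =ᵐ[volume.restrict (Ioo (0:ℝ) 1)] qf P := by
    filter_upwards [ae_restrict_mem measurableSet_Ioo] with u hu
    rw [hQX u hu]
    unfold qf
    congr 1
    ext x
    simp only [Set.mem_setOf_eq, hFX x, cdf_eq_real, measureReal_def]
  have hYae : QY =ᵐ[volume.restrict (Ioo (0:ℝ) 1)] qf Q := by
    filter_upwards [ae_restrict_mem measurableSet_Ioo] with u hu
    rw [hQY u hu]
    unfold qf
    congr 1
    ext x
    simp only [Set.mem_setOf_eq, hFY x, cdf_eq_real, measureReal_def]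
  have hX : Integrable QX (volume.restrict (Ioo (0:ℝ) 1)) :=
    (integrable_qf P hP).congr hXae.symm
  have hY : Integrable QY (volume.restrict (Ioo (0:ℝ) 1)) :=
    (integrable_qf Q hQ).congr hYae.symm
  have hh : Integrable (fun u => QX u - QY u) (volume.restrict (Ioo (0:ℝ) 1)) := hX.sub hY
  have hh1 : Integrable (fun u => QX (1-u) - QY (1-u)) (volume.restrict (Ioo (0:ℝ) 1)) :=
    integrable_comp_one_sub hh
  constructor
  · intro hyp
    -- moments of h := QX - QY against u^n - (1-u)^n vanish
    have moment : ∀ n : ℕ, ∫ u in Ioo (0:ℝ) 1,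
        (u ^ n - (1-u) ^ n) * (QX u - QY u) = 0 := by
      intro n
      have hk := hyp (n+1) (Nat.le_add_left 1 n)
      simp only [Nat.add_sub_cancel] at hk
      have hkc : ((n+1 : ℕ) : ℝ) ≠ 0 := by positivity
      have heq : ∫ u in Ioo (0:ℝ) 1, (u ^ n - (1-u) ^ n) * QX u
          = ∫ u in Ioo (0:ℝ) 1, (u ^ n - (1-u) ^ n) * QY u := mul_left_cancel₀ hkc hk
      calc ∫ u in Ioo (0:ℝ) 1, (u ^ n - (1-u) ^ n) * (QX u - QY u)
          = (∫ u in Ioo (0:ℝ) 1, (u ^ n - (1-u) ^ n) * QX u)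
            - ∫ u in Ioo (0:ℝ) 1, (u ^ n - (1-u) ^ n) * QY u := by
            rw [← integral_sub (integrable_phi_mul n hX) (integrable_phi_mul n hY)]
            exact integral_congr_ae (ae_of_all _ fun u => by ring)
        _ = 0 := by rw [heq, sub_self]
    -- moments of g := h - h∘(1-·) against all monomials vanish
    have hg : Integrable (fun u => (QX u - QY u) - (QX (1-u) - QY (1-u)))
        (volume.restrict (Ioo (0:ℝ) 1)) := hh.sub hh1
    have hgm : ∀ n : ℕ, ∫ u in Ioo (0:ℝ) 1,
        u ^ n * ((QX u - QY u) - (QX (1-u) - QY (1-u))) = 0 := by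
      intro n
      have hsub : ∫ u in Ioo (0:ℝ) 1, u ^ n * (QX (1-u) - QY (1-u))
          = ∫ u in Ioo (0:ℝ) 1, (1-u) ^ n * (QX u - QY u) := by
        rw [← sub_symm (fun u => (1-u) ^ n * (QX u - QY u))]
        refine integral_congr_ae (ae_of_all _ fun u => ?_)
        simp only [sub_sub_cancel]
      calc ∫ u in Ioo (0:ℝ) 1, u ^ n * ((QX u - QY u) - (QX (1-u) - QY (1-u)))
          = (∫ u in Ioo (0:ℝ) 1, u ^ n * (QX u - QY u))
            - ∫ u in Ioo (0:ℝ) 1, u ^ n * (QX (1-u) - QY (1-u)) := by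
            rw [← integral_sub (integrable_pow_mul n hh) (integrable_pow_mul n hh1)]
            exact integral_congr_ae (ae_of_all _ fun u => by ring)
        _ = (∫ u in Ioo (0:ℝ) 1, u ^ n * (QX u - QY u))
            - ∫ u in Ioo (0:ℝ) 1, (1-u) ^ n * (QX u - QY u) := by rw [hsub]
        _ = ∫ u in Ioo (0:ℝ) 1, (u ^ n - (1-u) ^ n) * (QX u - QY u) := by
            rw [← integral_sub (integrable_pow_mul n hh) (integrable_one_sub_pow_mul n hh)]
            exact integral_congr_ae (ae_of_all _ fun u => by ring)
        _ = 0 := moment n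
    have := ae_zero_of_moments _ hg hgm
    filter_upwards [this] with u hu
    exact sub_eq_zero.mp hu
  · intro hae k hk
    set n := k - 1 with hn
    have hdiff : ∫ u in Ioo (0:ℝ) 1, (u ^ n - (1-u) ^ n) * (QX u - QY u) = 0 := by
      have h1 : ∫ u in Ioo (0:ℝ) 1,
          (fun u => (u ^ n - (1-u) ^ n) * (QX u - QY u)) (1-u)
          = ∫ u in Ioo (0:ℝ) 1, (u ^ n - (1-u) ^ n) * (QX u - QY u) :=
        sub_symm (fun u => (u ^ n - (1-u) ^ n) * (QX u - QY u))
      have h2 : ∫ u in Ioo (0:ℝ) 1,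
          (fun u => (u ^ n - (1-u) ^ n) * (QX u - QY u)) (1-u)
          = - ∫ u in Ioo (0:ℝ) 1, (u ^ n - (1-u) ^ n) * (QX u - QY u) := by
        rw [← integral_neg]
        refine integral_congr_ae ?_
        filter_upwards [hae] with u hu
        simp only [sub_sub_cancel]
        rw [← hu]
        ring
      have := h1.symm.trans h2
      linarith
    have h3 : (∫ u in Ioo (0:ℝ) 1, (u ^ n - (1-u) ^ n) * QX u)
        - ∫ u in Ioo (0:ℝ) 1, (u ^ n - (1-u) ^ n) * QY u = 0 := by
      rw [← integral_sub (integrable_phi_mul n hX) (integrable_phi_mul n hY)]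
      exact (integral_congr_ae (ae_of_all _ fun u => by ring)).trans hdiff
    rw [sub_eq_zero.mp h3]
end
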